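/- Let p be an odd prime, f even with f ∣ p−1, and suppose 2^{p−1} ≢ 1 (mod p²). Let λ be the multiplicative order of 2 modulo p. Then for every integer k with 0 ≤ k < (p²−p)/2, the k-error linear complexity over F₂ of the sequence (s_n) satisfies LC_k ≥ λ·p. -/

import Mathlib

open Polynomial Finset

/-- The Fermat quotient `q_p(u) ∈ {0,…,p-1}`, with `q_p(u) ≡ (u^(p-1)-1)/p (mod p)`
for `gcd(u,p)=1`, and `q_p(u)=0` if `p ∣ u`. -/
def qp (p u : ℕ) : ℕ := if u % p = 0 then 0 else (u ^ (p - 1) - 1) / p % p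

/-- The generalized cyclotomic class `D_l^{(p^j, f)} = {g^(l + k·f·p^(j-1)) mod p^j : 0 ≤ k < e}`
where `e = (p-1)/f`. -/
def Dcl (p f g j l : ℕ) : Finset ℕ :=
  (Finset.range ((p - 1) / f)).image (fun k => g ^ (l + k * f * p ^ (j - 1)) % p ^ j)

/-- The class `D_l = {u : 0 ≤ u < p², gcd(u,p)=1, q_p(u)=l}` defined via Fermat quotients. -/
def Dq (p l : ℕ) : Finset ℕ :=
  (Finset.range (p ^ 2)).filter (fun u => u % p ≠ 0 ∧ qp p u = l)

/-- `C_0 = ⋃_{i=f/2}^{f-1} p·D_{(i+b mod f)}^{(p,f)} ∪ ⋃_{i=pf/2}^{pf-1} D_{(i+b mod pf)}^{(p²,f)}`. -/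
def C0 (p f g b : ℕ) : Finset ℕ :=
  ((Finset.Ico (f / 2) f).biUnion
      (fun i => (Dcl p f g 1 ((i + b) % f)).image (fun v => p * v))) ∪
  ((Finset.Ico (p * f / 2) (p * f)).biUnion (fun i => Dcl p f g 2 ((i + b) % (p * f))))

/-- `C_1 = ⋃_{i=0}^{f/2-1} p·D_{(i+b mod f)}^{(p,f)} ∪ ⋃_{i=0}^{pf/2-1} D_{(i+b mod pf)}^{(p²,f)} ∪ {0}`. -/
def C1 (p f g b : ℕ) : Finset ℕ :=
  ((Finset.range (f / 2)).biUnion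
      (fun i => (Dcl p f g 1 ((i + b) % f)).image (fun v => p * v))) ∪
  ((Finset.range (p * f / 2)).biUnion (fun i => Dcl p f g 2 ((i + b) % (p * f)))) ∪ {0}

/-- The binary sequence `(s_n)` of period `p²`: `s_n = 1` iff `n mod p² ∈ C_1`. -/
def seqS (p f g b : ℕ) (n : ℕ) : ZMod 2 :=
  if n % p ^ 2 ∈ C1 p f g b then 1 else 0

/-- Generating polynomial `S(X) = Σ_{n<T} s_n X^n ∈ F₂[X]`. -/
noncomputable def genPoly (T : ℕ) (s : ℕ → ZMod 2) : Polynomial (ZMod 2) :=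
  ∑ n ∈ Finset.range T, Polynomial.C (s n) * Polynomial.X ^ n

/-- Linear complexity over `F₂` of a `T`-periodic sequence:
`LC = T - deg gcd(X^T - 1, S(X))`. -/
noncomputable def LC (T : ℕ) (s : ℕ → ZMod 2) : ℕ :=
  T - (EuclideanDomain.gcd (Polynomial.X ^ T - 1) (genPoly T s)).natDegree

/-- The `k`-error linear complexity over `F₂`: the minimum linear complexity obtainable
by changing at most `k` terms of the sequence per period. -/
noncomputable def errLC (T k : ℕ) (s : ℕ → ZMod 2) : ℕ :=
  sInf { L | ∃ t : ℕ → ZMod 2,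
    ((Finset.range T).filter (fun n => t n ≠ s n)).card ≤ k ∧ L = LC T t }

/-- `g` is a primitive root modulo `m`: its multiplicative order in `ZMod m` is `φ(m)`. -/
def isPrimRoot (g m : ℕ) : Prop := orderOf (g : ZMod m) = Nat.totient m

/-- `Q_b = ⋃_{i=0}^{f/2-1} D_{(i+b mod f)}^{(p,f)} ⊆ {1,…,p-1}`. -/
def Qb (p f g b : ℕ) : Finset ℕ :=
  (Finset.range (f / 2)).biUnion (fun i => Dcl p f g 1 ((i + b) % f))

/-- `N_b = {1,…,p-1} \ Q_b`. -/
def Nb (p f g b : ℕ) : Finset ℕ := (Finset.Ico 1 p) \ Qb p f g b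

/-- `V_v = {v, v+p, v+2p, …, v+(p-1)p}`. -/
def Vset (p v : ℕ) : Finset ℕ := (Finset.range p).image (fun i => v + i * p)

private lemma pow_mod_eq_iff {g m : ℕ} (hu : IsUnit (g : ZMod m)) (a c : ℕ) :
    g ^ a % m = g ^ c % m ↔ a ≡ c [MOD orderOf (g : ZMod m)] := by
  rw [show (g ^ a % m = g ^ c % m) ↔ g ^ a ≡ g ^ c [MOD m] from Iff.rfl,
    ← ZMod.natCast_eq_natCast_iff, Nat.cast_pow, Nat.cast_pow]
  rcases hu with ⟨u, hu⟩
  rw [← hu, ← Units.val_pow_eq_pow_val, ← Units.val_pow_eq_pow_val]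
  rw [show ((↑(u ^ a) : ZMod m) = ↑(u ^ c)) ↔ u ^ a = u ^ c from ⟨fun h => Units.ext h, fun h => congrArg _ h⟩,
    pow_eq_pow_iff_modEq, orderOf_units]

private lemma pow_p_mod_sq {p a : ℕ} (h : a ≡ 1 [MOD p]) : a ^ p ≡ 1 [MOD p ^ 2] := by
  have ha : (a : ℤ) ≡ 1 [ZMOD p] := by exact_mod_cast Int.natCast_modEq_iff.mpr h
  have h1 : (p : ℤ) ∣ (a : ℤ) - 1 := Int.ModEq.dvd ha.symm
  have h2 : (p : ℤ) ∣ (∑ i ∈ range p, (a : ℤ) ^ i) := by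
    have hs : (∑ i ∈ range p, ((a : ℤ) ^ i - 1)) = (∑ i ∈ range p, (a : ℤ) ^ i) - p := by
      rw [Finset.sum_sub_distrib, Finset.sum_const, Finset.card_range]; simp
    have hd : (p : ℤ) ∣ ∑ i ∈ range p, ((a : ℤ) ^ i - 1) := by
      refine Finset.dvd_sum (fun i _ => ?_)
      have h4 := ha.pow i
      rw [one_pow] at h4
      exact h4.symm.dvd
    have h3 := dvd_sub hd (dvd_refl (p : ℤ))
    rw [hs] at h3
    simpa using h3
  have key : ((p : ℤ) * p) ∣ ((a : ℤ) ^ p - 1) := by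
    rw [← geom_sum_mul (a : ℤ) p]
    exact mul_dvd_mul h2 h1
  have : ((p ^ 2 : ℕ) : ℤ) ∣ ((1 : ℤ) - (a ^ p : ℕ)) := by
    push_cast
    rw [show (1 : ℤ) - (a : ℤ) ^ p = -((a:ℤ)^p - 1) by ring]
    refine dvd_neg.mpr ?_
    rw [sq]
    exact_mod_cast key
  exact (Nat.modEq_iff_dvd).mpr this

private lemma ord_g2 {p g : ℕ} (hp : p.Prime) (hg : isPrimRoot g (p ^ 2)) :
    orderOf (g : ZMod (p ^ 2)) = p * (p - 1) := by
  rw [isPrimRoot] at hg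
  rw [hg, Nat.totient_prime_pow hp (by norm_num : 0 < 2)]
  simp [pow_one]

private lemma g_unit_sq {p g : ℕ} (hp : p.Prime) (hg : isPrimRoot g (p ^ 2)) :
    IsUnit (g : ZMod (p ^ 2)) := by
  have h1 : orderOf (g : ZMod (p ^ 2)) ≠ 0 := by
    rw [ord_g2 hp hg]
    have := hp.two_le
    exact Nat.mul_ne_zero (by omega) (by omega)
  exact (orderOf_pos_iff.mp (Nat.pos_of_ne_zero h1)).isUnit

private lemma g_unit_p {p g : ℕ} (hp : p.Prime) (hg : isPrimRoot g (p ^ 2)) :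
    IsUnit (g : ZMod p) := by
  have h := (g_unit_sq hp hg).map (ZMod.castHom (dvd_pow_self p two_ne_zero) (ZMod p))
  rwa [map_natCast] at h

private lemma not_p_dvd_g {p g : ℕ} (hp : p.Prime) (hg : isPrimRoot g (p ^ 2)) : ¬ p ∣ g := by
  intro hdvd
  haveI : NeZero p := ⟨hp.pos.ne'⟩
  have h0 : (g : ZMod p) = 0 := (ZMod.natCast_eq_zero_iff g p).mpr hdvd
  have hu := g_unit_p hp hg
  rw [h0] at hu
  haveI : Fact p.Prime := ⟨hp⟩
  exact hu.ne_zero rfl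

private lemma ord_g1 {p g : ℕ} (hp : p.Prime) (hg : isPrimRoot g (p ^ 2)) :
    orderOf (g : ZMod p) = p - 1 := by
  haveI : Fact p.Prime := ⟨hp⟩
  have hne : (g : ZMod p) ≠ 0 := by
    haveI : NeZero p := ⟨hp.pos.ne'⟩
    rw [Ne, ZMod.natCast_eq_zero_iff]
    exact not_p_dvd_g hp hg
  have hd1 : orderOf (g : ZMod p) ∣ p - 1 :=
    orderOf_dvd_of_pow_eq_one (ZMod.pow_card_sub_one_eq_one hne)
  have hd2 : p - 1 ∣ orderOf (g : ZMod p) := by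
    set d := orderOf (g : ZMod p) with hdd
    have h1 : (g : ZMod p) ^ d = 1 := pow_orderOf_eq_one _
    have h2 : g ^ d ≡ 1 [MOD p] := by
      rw [← ZMod.natCast_eq_natCast_iff]
      push_cast
      simpa using h1
    have h3 : g ^ (d * p) ≡ 1 [MOD p ^ 2] := by
      rw [pow_mul]
      exact pow_p_mod_sq h2
    have h4 : (g : ZMod (p ^ 2)) ^ (d * p) = 1 := by
      have := (ZMod.natCast_eq_natCast_iff _ _ _).mpr h3
      push_cast at this
      simpa using this
    have h5 : p * (p - 1) ∣ d * p := by
      rw [← ord_g2 hp hg]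
      exact orderOf_dvd_of_pow_eq_one h4
    rw [mul_comm p (p-1)] at h5
    exact (Nat.mul_dvd_mul_iff_right hp.pos).mp h5
  exact Nat.dvd_antisymm hd1 hd2

private lemma ord2_sq {p : ℕ} (hp : p.Prime) (hodd : Odd p)
    (h2 : (2 : ZMod (p ^ 2)) ^ (p - 1) ≠ 1) :
    orderOf (2 : ZMod (p ^ 2)) = orderOf (2 : ZMod p) * p := by
  haveI : Fact p.Prime := ⟨hp⟩
  have hp3 : 3 ≤ p := by
    rcases hodd with ⟨m, hm⟩
    have := hp.two_le
    omega
  have hcast : ((2 : ℕ) : ZMod p) = (2 : ZMod p) := by push_cast; rfl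
  have hcast2 : ((2 : ℕ) : ZMod (p ^ 2)) = (2 : ZMod (p ^ 2)) := by push_cast; rfl
  have hne : (2 : ZMod p) ≠ 0 := by
    rw [← hcast, Ne, ZMod.natCast_eq_zero_iff]
    intro h
    have := Nat.le_of_dvd (by norm_num) h
    omega
  set l := orderOf (2 : ZMod p) with hl
  set d := orderOf (2 : ZMod (p ^ 2)) with hd
  have hld : l ∣ p - 1 := orderOf_dvd_of_pow_eq_one (ZMod.pow_card_sub_one_eq_one hne)
  have hlne : l ≠ 0 := by
    intro h0
    rw [h0] at hld
    have := Nat.eq_zero_of_zero_dvd hld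
    omega
  have dvd1 : d ∣ l * p := by
    apply orderOf_dvd_of_pow_eq_one
    have h1 : (2 : ZMod p) ^ l = 1 := pow_orderOf_eq_one _
    have h2n : (2 : ℕ) ^ l ≡ 1 [MOD p] := by
      rw [← ZMod.natCast_eq_natCast_iff]
      push_cast
      simpa [hcast] using h1
    have h3 : (2 : ℕ) ^ (l * p) ≡ 1 [MOD p ^ 2] := by
      rw [pow_mul]; exact pow_p_mod_sq h2n
    have h4 := (ZMod.natCast_eq_natCast_iff _ _ _).mpr h3
    push_cast at h4
    simpa [hcast2] using h4
  have dvd2 : l ∣ d := by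
    apply orderOf_dvd_of_pow_eq_one
    have h1 : (2 : ZMod (p ^ 2)) ^ d = 1 := pow_orderOf_eq_one _
    have h4 := congrArg (ZMod.castHom (dvd_pow_self p two_ne_zero) (ZMod p)) h1
    rw [map_pow, map_one] at h4
    rw [← hcast2] at h4
    rw [map_natCast] at h4
    rwa [hcast] at h4
  obtain ⟨m, hm⟩ := dvd2
  have hmp : m ∣ p := by
    rw [hm] at dvd1
    exact (Nat.mul_dvd_mul_iff_left (Nat.pos_of_ne_zero hlne)).mp dvd1
  rcases (Nat.Prime.eq_one_or_self_of_dvd hp m hmp) with h1 | h1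
  · exfalso
    rw [h1, mul_one] at hm
    obtain ⟨c, hc⟩ := hld
    apply h2
    have : (2 : ZMod (p ^ 2)) ^ l = 1 := by rw [← hm]; exact pow_orderOf_eq_one _
    rw [hc, pow_mul, this, one_pow]
  · rw [hm, h1]

private lemma count_mod_filter {f a : ℕ} (hf : 0 < f) (ha : a < f) (N : ℕ) :
    ((range N).filter (fun i => i % f = a)).card = (N + (f - 1) - a) / f := by
  induction N with
  | zero =>
    rw [Finset.range_zero, Finset.filter_empty, Finset.card_empty]
    rw [Nat.div_eq_of_lt (by omega)]
  | succ n ih =>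
    rw [Finset.range_add_one, Finset.filter_insert]
    have harith : n + 1 + (f - 1) - a = (n + (f - 1) - a) + 1 := by omega
    by_cases h : n % f = a
    · rw [if_pos h, Finset.card_insert_of_notMem (by simp), ih]
      obtain ⟨q, hq⟩ : ∃ q, n = f * q + a :=
        ⟨n / f, by conv_lhs => rw [← Nat.div_add_mod n f, h]⟩
      have hdvd : f ∣ (n + (f - 1) - a) + 1 := by
        refine ⟨q + 1, ?_⟩
        have e3 : f * (q + 1) = f * q + f := by ring
        omega
      rw [harith, Nat.succ_div_of_dvd hdvd]
    · rw [if_neg h, ih, harith, Nat.succ_div_of_not_dvd]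
      intro hdvd
      apply h
      obtain ⟨c, hc⟩ := hdvd
      have hc1 : 1 ≤ c := by
        rcases Nat.eq_zero_or_pos c with h0 | h0
        · rw [h0, mul_zero] at hc; omega
        · exact h0
      obtain ⟨c', rfl⟩ : ∃ c', c = c' + 1 := ⟨c - 1, by omega⟩
      have e3 : f * (c' + 1) = f * c' + f := by ring
      have hn : n = f * c' + a := by omega
      rw [hn, Nat.mul_add_mod, Nat.mod_eq_of_lt ha]

private lemma colj (p f g b : ℕ) (hp : p.Prime) (hodd : Odd p) (hf : Even f)
    (hfpos : 0 < f) (hfd : f ∣ p - 1) (hg : isPrimRoot g (p ^ 2)) (hb : b < f * p)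
    {j : ℕ} (hj1 : 1 ≤ j) (hj : j < p) :
    (p - 1) / 2 ≤ ((range p).filter (fun i => i * p + j ∈ C1 p f g b)).card ∧
    ((range p).filter (fun i => i * p + j ∈ C1 p f g b)).card ≤ (p + 1) / 2 := by
  obtain ⟨mm, hmm⟩ := hodd
  have hp3 : 3 ≤ p := by have := hp.two_le; omega

  obtain ⟨f', hf'⟩ : ∃ f', f = 2 * f' := by
    obtain ⟨r, hr⟩ := hf; exact ⟨r, by omega⟩
  set e := (p - 1) / f with he
  have hef : f * e = p - 1 := Nat.mul_div_cancel' hfd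
  have hepos : 0 < e := by
    rcases Nat.eq_zero_or_pos e with h0 | h0
    · rw [h0, mul_zero] at hef; omega
    · exact h0
  have heltp : e < p := by
    have h1 : e * 1 ≤ e * f := Nat.mul_le_mul_left e (by omega)
    have h2 : e * f = f * e := mul_comm e f
    omega
  have hcop : Nat.Coprime p e := (Nat.Prime.coprime_iff_not_dvd hp).mpr
    (fun hd => by have := Nat.le_of_dvd hepos hd; omega)
  obtain ⟨e', he'⟩ : ∃ e', e * e' % p = 1 :=
    by obtain ⟨m, -, hm⟩ := Nat.exists_mul_mod_eq_one_of_coprime (Nat.coprime_comm.mp hcop) (by omega); exact ⟨m, hm⟩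
  have hee' : e * e' ≡ 1 [MOD p] := by
    show e * e' % p = 1 % p
    rw [he', Nat.mod_eq_of_lt (by omega)]
  have hpf0 : 0 < p * f := by positivity
  have hplepf : p ≤ p * f := by
    calc p = p * 1 := (mul_one p).symm
      _ ≤ p * f := Nat.mul_le_mul_left p (by omega)
  have hcomm : f * p = p * f := mul_comm f p
  have hbpf : b < p * f := by omega
  have hppf : p * (p - 1) = (p * f) * e := by rw [← hef]; ring
  have hpfe : p * f ∣ p * (p - 1) := ⟨e, hppf⟩
  have hfpf : f ∣ p * f := ⟨p, mul_comm p f⟩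
  have hpp1 : 0 < p * (p - 1) := by
    have h1 : (p * f) * 1 ≤ (p * f) * e := Nat.mul_le_mul_left _ hepos
    omega
  have hordp := ord_g1 hp hg
  have hordp2 := ord_g2 hp hg
  have hup := g_unit_p hp hg
  have hup2 := g_unit_sq hp hg
  have hgnd := not_p_dvd_g hp hg
  have hgm_ne : ∀ m : ℕ, g ^ m % p ≠ 0 := fun m hm =>
    hgnd (hp.dvd_of_dvd_pow (Nat.dvd_of_mod_eq_zero hm))
  have hpsq : p ^ 2 = p * p := sq p
  have hpsq0 : 0 < p ^ 2 := by positivity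
  obtain ⟨m0, hm0lt, hm0⟩ : ∃ m0, m0 < p - 1 ∧ g ^ m0 % p = j := by
    have hsurj := Finset.surj_on_of_inj_on_of_card_le
      (s := range (p - 1)) (t := Finset.Ico 1 p)
      (fun m _ => g ^ m % p)
      (fun a _ => Finset.mem_Ico.mpr
        ⟨Nat.one_le_iff_ne_zero.mpr (hgm_ne a), Nat.mod_lt _ (by omega)⟩)
      (fun a1 a2 h1 h2 heq => by
        have h3 := (pow_mod_eq_iff hup a1 a2).mp heq
        rw [hordp] at h3
        exact h3.eq_of_lt_of_lt (mem_range.mp h1) (mem_range.mp h2))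
      (by rw [Nat.card_Ico, Finset.card_range])
    obtain ⟨m0, hm0r, hm0⟩ := hsurj j (Finset.mem_Ico.mpr ⟨hj1, hj⟩)
    exact ⟨m0, mem_range.mp hm0r, hm0.symm⟩
  set W : Finset ℕ := (range (p * f / 2)).image (fun i' => (i' + b) % (p * f)) with hW
  set Ep : Finset ℕ := (range (p * (p - 1))).filter
      (fun m => m % (p - 1) = m0 ∧ m % (p * f) ∈ W) with hEp
  set rS : Finset ℕ := (range p).filter (fun r => (m0 + r * (p - 1)) % (p * f) ∈ W) with hrS
  set iS : Finset ℕ := (range (p * f / 2)).filter (fun i' => (i' + b) % f = m0 % f) with hiS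
  have hstepA : ((range p).filter (fun i => i * p + j ∈ C1 p f g b)).card = Ep.card := by
    refine (Finset.card_nbij (fun m => g ^ m % p ^ 2 / p) ?_ ?_ ?_).symm
    · intro m hm
      rw [hEp, Finset.mem_coe, Finset.mem_filter, Finset.mem_range] at hm
      obtain ⟨hmlt, hm1, hm2⟩ := hm
      set u := g ^ m % p ^ 2 with hu
      have hults : u < p ^ 2 := Nat.mod_lt _ hpsq0
      have hup' : u % p = g ^ m % p :=
        Nat.mod_mod_of_dvd _ (dvd_pow_self p two_ne_zero)
      have hmj : u % p = j := by
        rw [hup', ← hm0]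
        rw [pow_mod_eq_iff hup, hordp]
        show m % (p - 1) = m0 % (p - 1)
        rw [hm1, Nat.mod_eq_of_lt hm0lt]
      obtain ⟨i'', hi''r, hi''⟩ := Finset.mem_image.mp hm2
      have hklt : m / (p * f) < e := Nat.div_lt_of_lt_mul (by rw [← hppf]; exact hmlt)
      have hkdef := Nat.div_add_mod m (p * f)
      have hexp : m % (p * f) + m / (p * f) * f * p ^ (2 - 1) = m := by
        have hbr : m / (p * f) * f * p ^ (2 - 1) = (p * f) * (m / (p * f)) := by
          have h21 : p ^ (2 - 1) = p := by norm_num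
          rw [h21]; ring
        omega
      have humem : u ∈ Dcl p f g 2 (m % (p * f)) := by
        rw [Dcl]
        refine Finset.mem_image.mpr ⟨m / (p * f),
          Finset.mem_range.mpr (by rw [← he]; exact hklt), ?_⟩
        rw [hexp]
      have huC1 : u ∈ C1 p f g b := by
        rw [C1]
        refine Finset.mem_union.mpr (Or.inl (Finset.mem_union.mpr (Or.inr ?_)))
        refine Finset.mem_biUnion.mpr ⟨i'', hi''r, ?_⟩
        rw [hi'']
        exact humem
      rw [Finset.mem_coe, Finset.mem_filter, Finset.mem_range]
      have hdm := Nat.div_add_mod u p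
      have hidx : u / p < p := Nat.div_lt_of_lt_mul (by omega)
      have hieq : u / p * p + j = u := by
        have hc : p * (u / p) = u / p * p := mul_comm _ _
        omega
      exact ⟨hidx, by rw [hieq]; exact huC1⟩
    · intro m1 hm1 m2 hm2 heq
      rw [Finset.mem_coe, hEp, Finset.mem_filter, Finset.mem_range] at hm1 hm2
      obtain ⟨hlt1, he1, _⟩ := hm1
      obtain ⟨hlt2, he2, _⟩ := hm2
      have hmodeq : g ^ m1 % p = g ^ m2 % p := by
        rw [pow_mod_eq_iff hup, hordp]
        show m1 % (p - 1) = m2 % (p - 1)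
        rw [he1, he2]
      have hmp1 : g ^ m1 % p ^ 2 % p = g ^ m1 % p :=
        Nat.mod_mod_of_dvd _ (dvd_pow_self p two_ne_zero)
      have hmp2 : g ^ m2 % p ^ 2 % p = g ^ m2 % p :=
        Nat.mod_mod_of_dvd _ (dvd_pow_self p two_ne_zero)
      have hd1 := Nat.div_add_mod (g ^ m1 % p ^ 2) p
      have hd2 := Nat.div_add_mod (g ^ m2 % p ^ 2) p
      have heq' : g ^ m1 % p ^ 2 / p = g ^ m2 % p ^ 2 / p := heq
      have heq2 : p * (g ^ m1 % p ^ 2 / p) = p * (g ^ m2 % p ^ 2 / p) := by rw [heq']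
      have hueq : g ^ m1 % p ^ 2 = g ^ m2 % p ^ 2 := by omega
      have h3 := (pow_mod_eq_iff hup2 m1 m2).mp hueq
      rw [hordp2] at h3
      exact h3.eq_of_lt_of_lt hlt1 hlt2
    · intro i hi
      rw [Finset.mem_coe, Finset.mem_filter, Finset.mem_range] at hi
      obtain ⟨hip, hiC1⟩ := hi
      have hmodp : (i * p + j) % p = j := by
        rw [mul_comm i p, Nat.mul_add_mod, Nat.mod_eq_of_lt hj]
      rw [C1, Finset.mem_union, Finset.mem_union] at hiC1
      rcases hiC1 with (hA | hB) | h0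
      · exfalso
        obtain ⟨i'', _, hmem⟩ := Finset.mem_biUnion.mp hA
        obtain ⟨v, _, hpv⟩ := Finset.mem_image.mp hmem
        have hz : (p * v) % p = 0 := Nat.mul_mod_right p v
        rw [hpv] at hz
        omega
      · obtain ⟨i'', hi''r, hmem⟩ := Finset.mem_biUnion.mp hB
        rw [Dcl] at hmem
        obtain ⟨k, hkr, hku⟩ := Finset.mem_image.mp hmem
        rw [mem_range] at hkr
        set x := (i'' + b) % (p * f) + k * f * p ^ (2 - 1) with hx
        set m := x % (p * (p - 1)) with hm
        have hmx : g ^ m % p ^ 2 = g ^ x % p ^ 2 := by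
          rw [pow_mod_eq_iff hup2, hordp2]
          exact Nat.mod_modEq x _
        have hmu : g ^ m % p ^ 2 = i * p + j := by rw [hmx, hku]
        have humodp : g ^ m % p ^ 2 % p = j := by rw [hmu]; exact hmodp
        have hup' : g ^ m % p ^ 2 % p = g ^ m % p :=
          Nat.mod_mod_of_dvd _ (dvd_pow_self p two_ne_zero)
        refine ⟨m, ?_, ?_⟩
        · rw [Finset.mem_coe, hEp, Finset.mem_filter, Finset.mem_range]
          refine ⟨Nat.mod_lt _ hpp1, ?_, ?_⟩
          · have h4 : g ^ m % p = g ^ m0 % p := by rw [← hup', humodp, hm0]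
            have h5 := (pow_mod_eq_iff hup m m0).mp h4
            rw [hordp] at h5
            have h6 : m % (p - 1) = m0 % (p - 1) := h5
            rw [Nat.mod_eq_of_lt hm0lt] at h6
            exact h6
          · have hd1 : p * f ∣ k * f * p ^ (2 - 1) := by
              refine ⟨k, ?_⟩
              have h21 : p ^ (2 - 1) = p := by norm_num
              rw [h21]; ring
            have hmeqx : m ≡ x [MOD p * f] := (Nat.mod_modEq x _).of_dvd hpfe
            have hxl : x ≡ (i'' + b) % (p * f) [MOD p * f] := by
              rw [hx]
              conv_rhs => rw [← Nat.add_zero ((i'' + b) % (p * f))]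
              exact Nat.ModEq.add_left _ ((Nat.modEq_zero_iff_dvd).mpr hd1)
            have hfin : m % (p * f) = (i'' + b) % (p * f) % (p * f) := hmeqx.trans hxl
            rw [Nat.mod_mod_of_dvd _ dvd_rfl] at hfin
            rw [hfin]
            exact Finset.mem_image.mpr ⟨i'', hi''r, rfl⟩
        · have hdm := Nat.div_add_mod (g ^ m % p ^ 2) p
          have hc : p * ((g ^ m % p ^ 2) / p) = ((g ^ m % p ^ 2) / p) * p := mul_comm _ _
          have hc2 : i * p = p * i := mul_comm _ _
          have h7 : p * ((g ^ m % p ^ 2) / p) = p * i := by omega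
          exact Nat.eq_of_mul_eq_mul_left (by omega) h7
      · exfalso
        rw [Finset.mem_singleton] at h0
        omega
  have hstepB : Ep.card = rS.card := by
    refine Finset.card_nbij' (fun m => m / (p - 1)) (fun r => m0 + r * (p - 1)) ?_ ?_ ?_ ?_
    · intro m hm
      rw [hEp, Finset.mem_coe, Finset.mem_filter, Finset.mem_range] at hm
      obtain ⟨hmlt, hm1, hm2⟩ := hm
      have hrec : m0 + m / (p - 1) * (p - 1) = m := by
        have hdm := Nat.div_add_mod m (p - 1)
        have hc : (p - 1) * (m / (p - 1)) = m / (p - 1) * (p - 1) := mul_comm _ _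
        omega
      rw [hrS, Finset.mem_coe, Finset.mem_filter, Finset.mem_range]
      constructor
      · exact Nat.div_lt_of_lt_mul (by rw [mul_comm]; exact hmlt)
      · rw [hrec]; exact hm2
    · intro r hr
      rw [hrS, Finset.mem_coe, Finset.mem_filter, Finset.mem_range] at hr
      obtain ⟨hrp, hrw⟩ := hr
      rw [hEp, Finset.mem_coe, Finset.mem_filter, Finset.mem_range]
      show m0 + r * (p - 1) < p * (p - 1) ∧ (m0 + r * (p - 1)) % (p - 1) = m0 ∧
        (m0 + r * (p - 1)) % (p * f) ∈ W
      refine ⟨?_, ?_, hrw⟩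
      · have h1 : r * (p - 1) ≤ (p - 1) * (p - 1) :=
          Nat.mul_le_mul_right (p - 1) (by omega : r ≤ p - 1)
        have h2 : p * (p - 1) = (p - 1) * (p - 1) + (p - 1) := by
          have h3 : p = (p - 1) + 1 := by omega
          calc p * (p - 1) = ((p - 1) + 1) * (p - 1) := by rw [← h3]
            _ = (p - 1) * (p - 1) + (p - 1) := by ring
        omega
      · rw [Nat.add_mul_mod_self_right, Nat.mod_eq_of_lt hm0lt]
    · intro m hm
      rw [hEp, Finset.mem_coe, Finset.mem_filter, Finset.mem_range] at hm
      obtain ⟨hmlt, hm1, hm2⟩ := hm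
      show m0 + m / (p - 1) * (p - 1) = m
      have hdm := Nat.div_add_mod m (p - 1)
      have hc : (p - 1) * (m / (p - 1)) = m / (p - 1) * (p - 1) := mul_comm _ _
      omega
    · intro r hr
      rw [hrS, Finset.mem_coe, Finset.mem_filter, Finset.mem_range] at hr
      show (m0 + r * (p - 1)) / (p - 1) = r
      rw [Nat.add_mul_div_right _ _ (by omega : 0 < p - 1), Nat.div_eq_of_lt hm0lt]
      omega
  have hxm : ∀ i' ∈ iS, (m0 + (((i' + b + p * f - m0) / f * e') % p) * (p - 1)) % (p * f)
      = (i' + b) % (p * f) := by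
    intro i' hi'
    rw [hiS, Finset.mem_filter, Finset.mem_range] at hi'
    obtain ⟨hi'lt, hi'c⟩ := hi'
    set N := i' + b + p * f - m0 with hN
    have hm0le : m0 ≤ i' + b + p * f := by omega
    have hfN : f ∣ N := by
      have h2 : (i' + b) ≡ m0 [MOD f] := hi'c
      have h3 : i' + b + p * f ≡ i' + b + 0 [MOD f] :=
        Nat.ModEq.add_left _ ((Nat.modEq_zero_iff_dvd).mpr hfpf)
      rw [Nat.add_zero] at h3
      have h1 : m0 ≡ i' + b + p * f [MOD f] := (h2.symm).trans h3.symm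
      exact (Nat.modEq_iff_dvd' hm0le).mp h1
    set r := (N / f * e') % p with hr
    have hre : r * e ≡ N / f [MOD p] := by
      have h1 : r ≡ N / f * e' [MOD p] := Nat.mod_modEq _ _
      have h2 : r * e ≡ N / f * e' * e [MOD p] := h1.mul_right e
      have h3 : N / f * e' * e = N / f * (e * e') := by ring
      have h4 : N / f * (e * e') ≡ N / f * 1 [MOD p] := hee'.mul_left _
      rw [h3] at h2
      rw [Nat.mul_one] at h4
      exact h2.trans h4
    have href : r * (p - 1) ≡ N [MOD p * f] := by
      have h1 : (r * e) * f ≡ (N / f) * f [MOD p * f] := hre.mul_right' f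
      have h2 : (r * e) * f = r * (p - 1) := by rw [← hef]; ring
      have h3 : (N / f) * f = N := Nat.div_mul_cancel hfN
      rw [h2, h3] at h1
      exact h1
    have hfin : m0 + r * (p - 1) ≡ i' + b [MOD p * f] := by
      have h1 : m0 + r * (p - 1) ≡ m0 + N [MOD p * f] := href.add_left m0
      have h2 : m0 + N = i' + b + p * f := by omega
      rw [h2] at h1
      have h3 : i' + b + p * f ≡ i' + b + 0 [MOD p * f] :=
        Nat.ModEq.add_left _ ((Nat.modEq_zero_iff_dvd).mpr dvd_rfl)
      rw [Nat.add_zero] at h3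
      exact h1.trans h3
    exact hfin
  have hsig : ∀ r ∈ rS, ((m0 + r * (p - 1)) % (p * f) + p * f - b) % (p * f) ∈ iS ∧
      ((m0 + r * (p - 1)) % (p * f) + p * f - b) % (p * f) + b
        ≡ (m0 + r * (p - 1)) [MOD p * f] := by
    intro r hr
    rw [hrS, Finset.mem_filter, Finset.mem_range] at hr
    obtain ⟨hrp, hrw⟩ := hr
    set x := (m0 + r * (p - 1)) % (p * f) with hxdef
    obtain ⟨iw, hiwr, hiw⟩ := Finset.mem_image.mp hrw
    rw [mem_range] at hiwr
    have hxlt : x < p * f := Nat.mod_lt _ hpf0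
    have heq1 : (x + p * f - b) % (p * f) = iw := by
      have h1 : x + p * f - b + b = x + p * f := by omega
      have h2 : (iw + b) ≡ x [MOD p * f] := by
        rw [← hiw]; exact (Nat.mod_modEq _ _).symm
      have h3 : x + p * f - b + b ≡ iw + b [MOD p * f] := by
        rw [h1]
        have h4 : x + p * f ≡ x + 0 [MOD p * f] :=
          Nat.ModEq.add_left _ ((Nat.modEq_zero_iff_dvd).mpr dvd_rfl)
        rw [Nat.add_zero] at h4
        exact h4.trans h2.symm
      have h5 : x + p * f - b ≡ iw [MOD p * f] := Nat.ModEq.add_right_cancel' b h3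
      have h6 : (x + p * f - b) % (p * f) ≡ iw [MOD p * f] :=
        (Nat.mod_modEq _ _).trans h5
      refine h6.eq_of_lt_of_lt (Nat.mod_lt _ hpf0) ?_
      have h8 : p * f / 2 ≤ p * f := Nat.div_le_self _ _
      omega
    constructor
    · rw [heq1, hiS, Finset.mem_filter, Finset.mem_range]
      refine ⟨hiwr, ?_⟩
      show (iw + b) ≡ m0 [MOD f]
      have h2 : (iw + b) ≡ x [MOD f] := by
        have h2a := (Nat.mod_modEq (iw + b) (p * f)).symm.of_dvd hfpf
        rw [hiw] at h2a
        exact h2a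
      have h7 : x ≡ m0 + r * (p - 1) [MOD f] := (Nat.mod_modEq _ _).of_dvd hfpf
      have h8 : m0 + r * (p - 1) ≡ m0 + 0 [MOD f] := by
        refine Nat.ModEq.add_left _ ((Nat.modEq_zero_iff_dvd).mpr ?_)
        obtain ⟨c, hc⟩ := hfd
        exact ⟨r * c, by rw [hc]; ring⟩
      rw [Nat.add_zero] at h8
      exact (h2.trans h7).trans h8
    · rw [heq1]
      have h2 : (iw + b) ≡ x [MOD p * f] := by
        rw [← hiw]; exact (Nat.mod_modEq _ _).symm
      exact h2.trans (Nat.mod_modEq _ _)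
  have hstepC : rS.card = iS.card := by
    refine Finset.card_nbij'
      (fun r => ((m0 + r * (p - 1)) % (p * f) + p * f - b) % (p * f))
      (fun i' => (i' + b + p * f - m0) / f * e' % p) ?_ ?_ ?_ ?_
    · intro r hr
      exact (hsig r hr).1
    · intro i' hi'
      have hiw := hxm i' hi'
      rw [hiS, Finset.mem_coe, Finset.mem_filter, Finset.mem_range] at hi'
      rw [hrS, Finset.mem_coe, Finset.mem_filter, Finset.mem_range]
      show (i' + b + p * f - m0) / f * e' % p < p ∧
        (m0 + ((i' + b + p * f - m0) / f * e' % p) * (p - 1)) % (p * f) ∈ W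
      refine ⟨Nat.mod_lt _ (by omega), ?_⟩
      rw [hiw]
      exact Finset.mem_image.mpr ⟨i', Finset.mem_range.mpr hi'.1, rfl⟩
    · intro r hr
      have h1 := (hsig r hr).1
      have h2 := (hsig r hr).2
      show (((m0 + r * (p - 1)) % (p * f) + p * f - b) % (p * f) + b + p * f - m0) / f * e' % p
        = r
      set i' := ((m0 + r * (p - 1)) % (p * f) + p * f - b) % (p * f) with hi'def
      have h3 := hxm i' h1
      set r2 := (i' + b + p * f - m0) / f * e' % p with hr2
      have h4 : m0 + r2 * (p - 1) ≡ m0 + r * (p - 1) [MOD p * f] := by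
        have h5 : (m0 + r2 * (p - 1)) ≡ (i' + b) [MOD p * f] := by
          calc m0 + r2 * (p - 1) ≡ (m0 + r2 * (p - 1)) % (p * f) [MOD p * f] :=
                (Nat.mod_modEq _ _).symm
            _ = (i' + b) % (p * f) := h3
            _ ≡ i' + b [MOD p * f] := Nat.mod_modEq _ _
        exact h5.trans h2
      have h6 : r2 * (p - 1) ≡ r * (p - 1) [MOD p * f] := Nat.ModEq.add_left_cancel' m0 h4
      have h7 : (r2 * e) * f ≡ (r * e) * f [MOD p * f] := by
        have hb1 : r2 * e * f = r2 * (p - 1) := by rw [← hef]; ring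
        have hb2 : r * e * f = r * (p - 1) := by rw [← hef]; ring
        rw [hb1, hb2]; exact h6
      have h8 : r2 * e ≡ r * e [MOD p] := Nat.ModEq.mul_right_cancel' (by omega) h7
      have h9 : r2 ≡ r [MOD p] := Nat.ModEq.cancel_right_of_coprime hcop h8
      rw [hrS, Finset.mem_coe, Finset.mem_filter, Finset.mem_range] at hr
      exact h9.eq_of_lt_of_lt (Nat.mod_lt _ (by omega)) hr.1
    · intro i' hi'
      have h3 := hxm i' hi'
      rw [hiS, Finset.mem_coe, Finset.mem_filter, Finset.mem_range] at hi'
      show ((m0 + ((i' + b + p * f - m0) / f * e' % p) * (p - 1)) % (p * f) + p * f - b)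
        % (p * f) = i'
      rw [h3]
      have h1 : (i' + b) % (p * f) + p * f - b ≡ i' [MOD p * f] := by
        have h2 : (i' + b) % (p * f) + p * f - b + b = (i' + b) % (p * f) + p * f := by
          have := Nat.mod_le (i' + b) (p * f); omega
        have h4 : (i' + b) % (p * f) + p * f ≡ i' + b [MOD p * f] := by
          have h5 : (i' + b) % (p * f) + p * f ≡ (i' + b) % (p * f) + 0 [MOD p * f] :=
            Nat.ModEq.add_left _ ((Nat.modEq_zero_iff_dvd).mpr dvd_rfl)
          rw [Nat.add_zero] at h5
          exact h5.trans (Nat.mod_modEq _ _)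
        have h6 : (i' + b) % (p * f) + p * f - b + b ≡ i' + b [MOD p * f] := by
          rw [h2]; exact h4
        exact Nat.ModEq.add_right_cancel' b h6
      have h7 : ((i' + b) % (p * f) + p * f - b) % (p * f) ≡ i' [MOD p * f] :=
        (Nat.mod_modEq _ _).trans h1
      refine h7.eq_of_lt_of_lt (Nat.mod_lt _ hpf0) ?_
      have h8 : p * f / 2 ≤ p * f := Nat.div_le_self _ _
      omega
  have hstepD : (p - 1) / 2 ≤ iS.card ∧ iS.card ≤ (p + 1) / 2 := by
    set a0 := (m0 + (f - b % f)) % f with ha0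
    have ha0lt : a0 < f := Nat.mod_lt _ (by omega)
    have hbmf : b % f < f := Nat.mod_lt _ (by omega)
    have hcdvd : f ∣ b + (f - b % f) := by
      have hdm := Nat.div_add_mod b f
      refine ⟨b / f + 1, ?_⟩
      have hbr : f * (b / f + 1) = f * (b / f) + f := by ring
      omega
    have hshift : ∀ i' : ℕ, i' + (b + (f - b % f)) ≡ i' [MOD f] := by
      intro i'
      have h1 : i' + (b + (f - b % f)) ≡ i' + 0 [MOD f] :=
        Nat.ModEq.add_left _ ((Nat.modEq_zero_iff_dvd).mpr hcdvd)
      rwa [Nat.add_zero] at h1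
    have hiff : ∀ i' : ℕ, ((i' + b) % f = m0 % f) ↔ (i' % f = a0) := by
      intro i'
      have hmm0 : a0 ≡ m0 + (f - b % f) [MOD f] := Nat.mod_modEq _ _
      constructor
      · intro h
        have h0 : (i' + b) ≡ m0 [MOD f] := h
        have h2 : i' + b + (f - b % f) ≡ m0 + (f - b % f) [MOD f] := h0.add_right _
        have h3 : i' + (b + (f - b % f)) = i' + b + (f - b % f) := by omega
        have h4 : i' ≡ m0 + (f - b % f) [MOD f] := by
          have h5 := hshift i'
          rw [h3] at h5
          exact h5.symm.trans h2
        have h6 : i' ≡ a0 [MOD f] := h4.trans hmm0.symm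
        show i' % f = a0
        have h7 : i' % f = a0 % f := h6
        rw [h7, Nat.mod_eq_of_lt ha0lt]
      · intro h
        have h6 : i' ≡ a0 [MOD f] := by
          show i' % f = a0 % f
          rw [h, Nat.mod_eq_of_lt ha0lt]
        have h4 : i' ≡ m0 + (f - b % f) [MOD f] := h6.trans hmm0
        have h2 : i' + b ≡ m0 + (f - b % f) + b [MOD f] := h4.add_right b
        have h3 : m0 + (f - b % f) + b = m0 + (b + (f - b % f)) := by omega
        have h5 : m0 + (b + (f - b % f)) ≡ m0 [MOD f] := hshift m0
        show (i' + b) % f = m0 % f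
        exact h2.trans (h3 ▸ h5)
    have hiSeq : iS = (range (p * f / 2)).filter (fun i' => i' % f = a0) := by
      rw [hiS]
      exact Finset.filter_congr (fun i' _ => by rw [hiff i'])
    have hpf2 : p * f / 2 = mm * f + f' := by
      have h1 : p * f = 2 * (mm * f + f') := by rw [hmm, hf']; ring
      omega
    rw [hiSeq, count_mod_filter (by omega) ha0lt, hpf2]
    have hf'pos : 1 ≤ f' := by omega
    constructor
    · have h1 : mm ≤ (mm * f + f' + (f - 1) - a0) / f := by
        rw [Nat.le_div_iff_mul_le (by omega : 0 < f)]
        omega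
      omega
    · have h1 : (mm * f + f' + (f - 1) - a0) / f < mm + 2 := by
        rw [Nat.div_lt_iff_lt_mul (by omega : 0 < f)]
        have hbr : (mm + 2) * f = mm * f + 2 * f := by ring
        omega
      omega
  rw [hstepA, hstepB, hstepC]
  exact hstepD

private lemma col0 (p f g b : ℕ) (hp : p.Prime) (hodd : Odd p) (hf : Even f)
    (hfpos : 0 < f) (hfd : f ∣ p - 1) (hg : isPrimRoot g (p ^ 2)) (hb : b < f * p) :
    (p - 1) / 2 ≤ ((range p).filter (fun i => i * p ∈ C1 p f g b)).card ∧
    ((range p).filter (fun i => i * p ∈ C1 p f g b)).card ≤ (p + 1) / 2 := by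
  obtain ⟨mm, hmm⟩ := hodd
  have hp3 : 3 ≤ p := by have := hp.two_le; omega
  obtain ⟨f', hf'⟩ : ∃ f', f = 2 * f' := by
    obtain ⟨r, hr⟩ := hf; exact ⟨r, by omega⟩
  set e := (p - 1) / f with he
  have hef : f * e = p - 1 := Nat.mul_div_cancel' hfd
  have hepos : 0 < e := by
    rcases Nat.eq_zero_or_pos e with h0 | h0
    · rw [h0, mul_zero] at hef; omega
    · exact h0
  have hordp := ord_g1 hp hg
  have hup := g_unit_p hp hg
  have hgnd := not_p_dvd_g hp hg
  have hgm_ne : ∀ m : ℕ, g ^ m % p ≠ 0 := fun m hm =>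
    hgnd (hp.dvd_of_dvd_pow (Nat.dvd_of_mod_eq_zero hm))
  set Qb' : Finset ℕ := (range (f / 2)).biUnion (fun i' => Dcl p f g 1 ((i' + b) % f))
    with hQ
  have hsub : ∀ x ∈ Qb', x < p ∧ x ≠ 0 := by
    intro x hx
    obtain ⟨i', hi'r, hmem⟩ := Finset.mem_biUnion.mp hx
    rw [Dcl] at hmem
    obtain ⟨k, hkr, hk⟩ := Finset.mem_image.mp hmem
    rw [pow_one] at hk
    rw [← hk]
    exact ⟨Nat.mod_lt _ (by omega), hgm_ne _⟩
  have hset : (range p).filter (fun i => i * p ∈ C1 p f g b) = insert 0 Qb' := by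
    ext i
    simp only [Finset.mem_filter, Finset.mem_range, Finset.mem_insert]
    constructor
    · rintro ⟨hip, hC⟩
      rw [C1, Finset.mem_union, Finset.mem_union] at hC
      rcases hC with (hA | hB) | h0
      · right
        obtain ⟨i', hi'r, hmem⟩ := Finset.mem_biUnion.mp hA
        obtain ⟨v, hv, hpv⟩ := Finset.mem_image.mp hmem
        have hvi : v = i := by
          refine Nat.eq_of_mul_eq_mul_left (show 0 < p by omega) ?_
          rw [hpv, mul_comm]
        rw [hQ]
        exact Finset.mem_biUnion.mpr ⟨i', hi'r, hvi ▸ hv⟩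
      · exfalso
        obtain ⟨i'', _, hmem⟩ := Finset.mem_biUnion.mp hB
        rw [Dcl] at hmem
        obtain ⟨k, _, hk⟩ := Finset.mem_image.mp hmem
        have hdvd : p ∣ g ^ ((i'' + b) % (p * f) + k * f * p ^ (2 - 1)) := by
          have hdm := Nat.div_add_mod (g ^ ((i'' + b) % (p * f) + k * f * p ^ (2 - 1))) (p ^ 2)
          rw [hk] at hdm
          have h1 : p ∣ p ^ 2 * (g ^ ((i'' + b) % (p * f) + k * f * p ^ (2 - 1)) / p ^ 2) :=
            Dvd.dvd.mul_right (dvd_pow_self p two_ne_zero) _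
          have h2 : p ∣ i * p := Dvd.intro_left i rfl
          rw [← hdm]
          exact Nat.dvd_add h1 h2
        exact hgnd (hp.dvd_of_dvd_pow hdvd)
      · left
        rw [Finset.mem_singleton] at h0
        rcases Nat.mul_eq_zero.mp h0 with h | h
        · exact h
        · omega
    · rintro (rfl | hQmem)
      · refine ⟨by omega, ?_⟩
        rw [zero_mul, C1]
        exact Finset.mem_union.mpr (Or.inr (Finset.mem_singleton.mpr rfl))
      · refine ⟨(hsub i hQmem).1, ?_⟩
        obtain ⟨i', hi'r, hmem⟩ := Finset.mem_biUnion.mp hQmem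
        rw [C1]
        refine Finset.mem_union.mpr (Or.inl (Finset.mem_union.mpr (Or.inl ?_)))
        refine Finset.mem_biUnion.mpr ⟨i', hi'r, ?_⟩
        exact Finset.mem_image.mpr ⟨i, hmem, mul_comm p i ▸ rfl⟩
  rw [hset]
  have h0not : (0 : ℕ) ∉ Qb' := fun h => ((hsub 0 h).2 rfl)
  rw [Finset.card_insert_of_notMem h0not]
  have hdisj : ∀ x ∈ range (f / 2), ∀ y ∈ range (f / 2), x ≠ y →
      Disjoint (Dcl p f g 1 ((x + b) % f)) (Dcl p f g 1 ((y + b) % f)) := by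
    intro x hx y hy hxy
    rw [Finset.disjoint_left]
    intro a hax hay
    rw [Dcl] at hax hay
    obtain ⟨k1, hk1r, hk1⟩ := Finset.mem_image.mp hax
    obtain ⟨k2, hk2r, hk2⟩ := Finset.mem_image.mp hay
    have hkeq : g ^ ((x + b) % f + k1 * f * p ^ (1 - 1)) % p ^ 1
        = g ^ ((y + b) % f + k2 * f * p ^ (1 - 1)) % p ^ 1 := by rw [hk1, hk2]
    simp only [Nat.sub_self, pow_zero, mul_one, pow_one] at hkeq
    have h1 := (pow_mod_eq_iff hup _ _).mp hkeq
    rw [hordp] at h1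
    have h2 : (x + b) % f + k1 * f ≡ (y + b) % f + k2 * f [MOD f] := h1.of_dvd hfd
    have h3 : (x + b) % f ≡ (y + b) % f [MOD f] := by
      have h4 : (x + b) % f + k1 * f ≡ (x + b) % f + 0 [MOD f] :=
        Nat.ModEq.add_left _ ((Nat.modEq_zero_iff_dvd).mpr ⟨k1, mul_comm k1 f⟩)
      have h5 : (y + b) % f + k2 * f ≡ (y + b) % f + 0 [MOD f] :=
        Nat.ModEq.add_left _ ((Nat.modEq_zero_iff_dvd).mpr ⟨k2, mul_comm k2 f⟩)
      rw [Nat.add_zero] at h4 h5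
      exact (h4.symm.trans h2).trans h5
    have h6 : (x + b) % f = (y + b) % f :=
      h3.eq_of_lt_of_lt (Nat.mod_lt _ (by omega)) (Nat.mod_lt _ (by omega))
    have h7 : x + b ≡ y + b [MOD f] := h6
    have h8 : x ≡ y [MOD f] := Nat.ModEq.add_right_cancel' b h7
    rw [mem_range] at hx hy
    exact hxy (h8.eq_of_lt_of_lt (by omega) (by omega))
  have hcard : Qb'.card = f' * e := by
    rw [hQ, Finset.card_biUnion (fun x hx y hy hxy => hdisj x hx y hy hxy)]
    have hone : ∀ i' ∈ range (f / 2), (Dcl p f g 1 ((i' + b) % f)).card = e := by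
      intro i' _
      rw [Dcl, Finset.card_image_of_injOn, Finset.card_range, ← he]
      intro k1 h1 k2 h2 hkeq
      simp only [Finset.coe_range, Set.mem_Iio] at h1 h2
      simp only [Nat.sub_self, pow_zero, mul_one, pow_one] at hkeq
      have hmq := (pow_mod_eq_iff hup _ _).mp hkeq
      rw [hordp] at hmq
      have h3 : k1 * f ≡ k2 * f [MOD p - 1] := Nat.ModEq.add_left_cancel' _ hmq
      have h4 : k1 * f ≡ k2 * f [MOD e * f] := by
        have : e * f = p - 1 := by rw [mul_comm]; exact hef
        rw [this]; exact h3
      have h5 : k1 ≡ k2 [MOD e] := Nat.ModEq.mul_right_cancel' (by omega) h4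
      rw [← he] at h1 h2
      exact h5.eq_of_lt_of_lt h1 h2
    rw [Finset.sum_congr rfl hone, Finset.sum_const, Finset.card_range, smul_eq_mul]
    have : f / 2 = f' := by omega
    rw [this]
  rw [hcard]
  have hkey : 2 * (f' * e) = p - 1 := by
    have h1 : f * e = 2 * (f' * e) := by rw [hf']; ring
    omega
  constructor <;> omega

private lemma dvd_of_irreducible_dvd (B : Polynomial (ZMod 2)) :
    ∀ A : Polynomial (ZMod 2), Squarefree A →
      (∀ q : Polynomial (ZMod 2), Irreducible q → q ∣ A → q ∣ B) → A ∣ B := by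
  intro A
  induction A using WfDvdMonoid.induction_on_irreducible with
  | zero => exact fun hA _ => absurd hA not_squarefree_zero
  | unit u hu' => exact fun _ _ => hu'.dvd
  | mul a q ha hq ih =>
    intro hsq h
    have hqB : q ∣ B := h q hq (Dvd.intro a rfl)
    have haB : a ∣ B := ih (hsq.squarefree_of_dvd (Dvd.intro_left q rfl))
      (fun r hr hra => h r hr (hra.trans (Dvd.intro_left q rfl)))
    have hqa : ¬ q ∣ a := fun hd => hq.not_isUnit (hsq q (mul_dvd_mul_left q hd))
    exact ((hq.coprime_iff_not_dvd).mpr hqa).mul_dvd hqB haB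

private lemma genPoly_coeff (T : ℕ) (s : ℕ → ZMod 2) (n : ℕ) (hn : n < T) :
    (genPoly T s).coeff n = s n := by
  rw [genPoly, Polynomial.finset_sum_coeff]
  rw [Finset.sum_eq_single n
    (fun m _ hmn => by
      rw [Polynomial.coeff_C_mul, Polynomial.coeff_X_pow,
        if_neg (fun h => hmn h.symm), mul_zero])
    (fun hnot => absurd (Finset.mem_range.mpr hn) hnot)]
  rw [Polynomial.coeff_C_mul, Polynomial.coeff_X_pow, if_pos rfl, mul_one]

private lemma genPoly_natDegree_le (T : ℕ) (s : ℕ → ZMod 2) (hT : 0 < T) :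
    (genPoly T s).natDegree ≤ T - 1 := by
  rw [genPoly]
  refine Polynomial.natDegree_sum_le_of_forall_le _ _ (fun i hi => ?_)
  refine (Polynomial.natDegree_C_mul_le _ _).trans ?_
  rw [Polynomial.natDegree_X_pow]
  have := Finset.mem_range.mp hi
  omega

private lemma phi_mul_coeff (p : ℕ) (hp : 0 < p) (R : Polynomial (ZMod 2))
    (hR : R.natDegree < p) (i j : ℕ) (hi : i < p) (hj : j < p) :
    ((∑ i' ∈ range p, ((X : Polynomial (ZMod 2)) ^ p) ^ i') * R).coeff (i * p + j)
      = R.coeff j := by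
  rw [Finset.sum_mul, Polynomial.finset_sum_coeff]
  rw [Finset.sum_eq_single i]
  · rw [← pow_mul, mul_comm ((X : Polynomial (ZMod 2)) ^ (p * i)) R,
      Polynomial.coeff_mul_X_pow']
    rw [if_pos (by have : p * i = i * p := mul_comm p i; omega)]
    congr 1
    have : p * i = i * p := mul_comm p i
    omega
  · intro i' _ hne
    rw [← pow_mul, mul_comm ((X : Polynomial (ZMod 2)) ^ (p * i')) R,
      Polynomial.coeff_mul_X_pow']
    rcases Nat.lt_or_ge i' i with hlt | hge
    · rw [if_pos]
      · refine Polynomial.coeff_eq_zero_of_natDegree_lt ?_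
        have h1 : (i' + 1) * p ≤ i * p := Nat.mul_le_mul_right p (by omega)
        have h2 : (i' + 1) * p = i' * p + p := by ring
        have h3 : p * i' = i' * p := mul_comm p i'
        omega
      · have h1 : i' * p ≤ i * p := Nat.mul_le_mul_right p (by omega)
        have h3 : p * i' = i' * p := mul_comm p i'
        omega
    · have hgt : i < i' := lt_of_le_of_ne hge (fun h => hne h.symm)
      rw [if_neg]
      have h1 : (i + 1) * p ≤ i' * p := Nat.mul_le_mul_right p (by omega)
      have h2 : (i + 1) * p = i * p + p := by ring
      have h3 : p * i' = i' * p := mul_comm p i'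
      omega
  · intro hnot
    exact absurd (Finset.mem_range.mpr hi) hnot

private lemma card_filter_split (p : ℕ) (hp : 0 < p) (P : ℕ → Prop) [DecidablePred P] :
    ((range (p * p)).filter (fun n => P n)).card
      = ∑ j ∈ range p, ((range p).filter (fun i => P (i * p + j))).card := by
  have hunion : (range (p * p)).filter (fun n => P n)
      = (range p).biUnion
          (fun j => ((range p).filter (fun i => P (i * p + j))).image (fun i => i * p + j)) := by
    ext n
    simp only [mem_filter, mem_range, mem_biUnion, mem_image]
    constructor
    · rintro ⟨hn, hP⟩
      have hdm := Nat.div_add_mod n p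
      have hcomm : p * (n / p) = (n / p) * p := mul_comm _ _
      refine ⟨n % p, Nat.mod_lt _ hp, n / p, ⟨Nat.div_lt_of_lt_mul hn, ?_⟩, by omega⟩
      have : n / p * p + n % p = n := by omega
      rw [this]
      exact hP
    · rintro ⟨j, hj, i, ⟨hi, hP⟩, rfl⟩
      refine ⟨?_, hP⟩
      have h1 : (i + 1) * p ≤ p * p := Nat.mul_le_mul_right p (by omega)
      have h2 : (i + 1) * p = i * p + p := by ring
      omega
  rw [hunion, Finset.card_biUnion]
  · refine Finset.sum_congr rfl (fun j hj => ?_)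
    refine Finset.card_image_of_injOn (fun a _ a2 _ heq => ?_)
    have : a * p = a2 * p := by omega
    exact Nat.eq_of_mul_eq_mul_right hp this
  · intro x hx y hy hxy
    rw [Function.onFun, Finset.disjoint_left]
    intro a hax hay
    obtain ⟨i1, hi1, he1⟩ := Finset.mem_image.mp hax
    obtain ⟨i2, hi2, he2⟩ := Finset.mem_image.mp hay
    rw [Finset.mem_filter, Finset.mem_range] at hi1 hi2
    rw [Finset.mem_coe, mem_range] at hx hy
    have hm1 : a % p = x := by
      rw [← he1, mul_comm i1 p, Nat.mul_add_mod, Nat.mod_eq_of_lt hx]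
    have hm2 : a % p = y := by
      rw [← he2, mul_comm i2 p, Nat.mul_add_mod, Nat.mod_eq_of_lt hy]
    exact hxy (hm1 ▸ hm2 ▸ rfl)

private lemma factor_deg {p : ℕ} (hp : p.Prime) (hodd : Odd p)
    {q : Polynomial (ZMod 2)} (hq : Irreducible q)
    (hdvd : q ∣ (∑ i ∈ range p, ((X : Polynomial (ZMod 2)) ^ p) ^ i)) :
    orderOf (2 : ZMod (p ^ 2)) ≤ q.natDegree := by
  have hp1 : 1 < p := hp.one_lt
  have hident : (∑ i ∈ range p, ((X : Polynomial (ZMod 2)) ^ p) ^ i) *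
      ((X : Polynomial (ZMod 2)) ^ p - 1) = (X : Polynomial (ZMod 2)) ^ (p ^ 2) - 1 := by
    rw [geom_sum_mul, ← pow_mul, sq]
  have hXT0 : (X : Polynomial (ZMod 2)) ^ (p ^ 2) - 1 ≠ 0 := by
    have h := Polynomial.X_pow_sub_C_ne_zero (R := ZMod 2) (by positivity : 0 < p ^ 2) 1
    rwa [Polynomial.C_1] at h
  have hsqfree : Squarefree ((X : Polynomial (ZMod 2)) ^ (p ^ 2) - 1) := by
    refine Polynomial.Separable.squarefree ?_
    refine Polynomial.X_pow_sub_one_separable_iff.mpr ?_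
    have hoddT : Odd (p ^ 2) := hodd.pow
    rw [Ne, ZMod.natCast_eq_zero_iff]
    rw [Nat.odd_iff] at hoddT
    omega
  have hPhiDvd : (∑ i ∈ range p, ((X : Polynomial (ZMod 2)) ^ p) ^ i) ∣
      (X : Polynomial (ZMod 2)) ^ (p ^ 2) - 1 := ⟨_, hident.symm⟩
  have hqXT : q ∣ (X : Polynomial (ZMod 2)) ^ (p ^ 2) - 1 := hdvd.trans hPhiDvd
  have hqXp : ¬ q ∣ (X : Polynomial (ZMod 2)) ^ p - 1 := by
    intro hc
    have hqq : q * q ∣ (X : Polynomial (ZMod 2)) ^ (p ^ 2) - 1 := by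
      rw [← hident]
      exact mul_dvd_mul hdvd hc
    exact hq.not_isUnit (hsqfree q hqq)
  haveI : Fact (Irreducible q) := ⟨hq⟩
  have hq0 : q ≠ 0 := hq.ne_zero
  have hdpos : 0 < q.natDegree := hq.natDegree_pos
  haveI : Module.Finite (ZMod 2) (AdjoinRoot q) :=
    Module.Finite.of_basis (AdjoinRoot.powerBasis hq0).basis
  haveI : Finite (AdjoinRoot q) := Module.finite_of_finite (ZMod 2)
  letI : Fintype (AdjoinRoot q) := Fintype.ofFinite _
  have hcard : Fintype.card (AdjoinRoot q) = 2 ^ q.natDegree := by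
    rw [Module.card_eq_pow_finrank (K := ZMod 2), ZMod.card, (AdjoinRoot.powerBasis hq0).finrank, AdjoinRoot.powerBasis_dim]
  set β := AdjoinRoot.root q with hβ
  have hβT : β ^ (p ^ 2) = 1 := by
    have h1 : AdjoinRoot.mk q ((X : Polynomial (ZMod 2)) ^ (p ^ 2) - 1) = 0 :=
      AdjoinRoot.mk_eq_zero.mpr hqXT
    rw [map_sub, map_pow, map_one, AdjoinRoot.mk_X] at h1
    exact sub_eq_zero.mp h1
  have hβp : β ^ p ≠ 1 := by
    intro hc
    apply hqXp
    rw [← AdjoinRoot.mk_eq_zero, map_sub, map_pow, map_one, AdjoinRoot.mk_X]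
    exact sub_eq_zero.mpr hc
  have hβ0 : β ≠ 0 := by
    intro hc
    rw [hc] at hβT
    rw [zero_pow (by positivity)] at hβT
    exact zero_ne_one hβT
  have hordβ : orderOf β = p ^ 2 := by
    have h1 : orderOf β ∣ p ^ 2 := orderOf_dvd_of_pow_eq_one hβT
    obtain ⟨i, hile, hival⟩ := (Nat.dvd_prime_pow hp).mp h1
    interval_cases i
    · rw [pow_zero] at hival
      rw [orderOf_eq_one_iff] at hival
      exact absurd (by rw [hival, one_pow]) hβp
    · rw [pow_one] at hival
      exact absurd (hival ▸ pow_orderOf_eq_one β) hβp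
    · exact hival
  have hdvd2 : p ^ 2 ∣ 2 ^ q.natDegree - 1 := by
    rw [← hordβ]
    apply orderOf_dvd_of_pow_eq_one
    have := FiniteField.pow_card_sub_one_eq_one β hβ0
    rwa [hcard] at this
  have h2d : (2 : ZMod (p ^ 2)) ^ q.natDegree = 1 := by
    have h2pos : 1 ≤ 2 ^ q.natDegree := Nat.one_le_two_pow
    obtain ⟨c, hc⟩ := hdvd2
    have hnat : (2 : ℕ) ^ q.natDegree ≡ 1 [MOD p ^ 2] := by
      show 2 ^ q.natDegree % p ^ 2 = 1 % p ^ 2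
      have h3 : 2 ^ q.natDegree = p ^ 2 * c + 1 := by omega
      rw [h3, Nat.mul_add_mod]
    have h4 := (ZMod.natCast_eq_natCast_iff _ _ _).mpr hnat
    push_cast at h4
    exact h4
  have h5 : orderOf (2 : ZMod (p ^ 2)) ∣ q.natDegree := orderOf_dvd_of_pow_eq_one h2d
  exact Nat.le_of_dvd hdpos h5

private lemma LC_lower (p f g b : ℕ) (hp : p.Prime) (hodd : Odd p) (hf : Even f)
    (hfpos : 0 < f) (hfd : f ∣ p - 1) (hg : isPrimRoot g (p ^ 2)) (hb : b < f * p)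
    (h2 : (2 : ZMod (p ^ 2)) ^ (p - 1) ≠ 1) (k : ℕ) (hk : k < (p ^ 2 - p) / 2)
    (t : ℕ → ZMod 2)
    (ht : ((Finset.range (p ^ 2)).filter (fun n => t n ≠ seqS p f g b n)).card ≤ k) :
    orderOf (2 : ZMod p) * p ≤ LC (p ^ 2) t := by
  classical
  obtain ⟨mm, hmm⟩ := hodd
  have hodd' : Odd p := ⟨mm, hmm⟩
  have hp3 : 3 ≤ p := by have := hp.two_le; omega
  have hpsq : p ^ 2 = p * p := sq p
  haveI : Fact p.Prime := ⟨hp⟩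
  set lam := orderOf (2 : ZMod p) with hlam
  have h2ne : (2 : ZMod p) ≠ 0 := by
    have h2c : ((2 : ℕ) : ZMod p) ≠ 0 := by
      rw [Ne, ZMod.natCast_eq_zero_iff]
      intro hdd; have := Nat.le_of_dvd (by norm_num) hdd; omega
    simpa using h2c
  have hlam_dvd : lam ∣ p - 1 :=
    orderOf_dvd_of_pow_eq_one (ZMod.pow_card_sub_one_eq_one h2ne)
  have hlam_le : lam ≤ p - 1 := Nat.le_of_dvd (by omega) hlam_dvd
  have hord2 : orderOf (2 : ZMod (p ^ 2)) = lam * p := ord2_sq hp hodd' h2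
  have hlamp_le : lam * p ≤ p ^ 2 := by
    have h1 : lam * p ≤ (p - 1) * p := Nat.mul_le_mul_right p hlam_le
    have h2' : (p - 1) * p ≤ p * p := Nat.mul_le_mul_right p (by omega)
    omega
  set Φ : Polynomial (ZMod 2) := ∑ i ∈ range p, ((X : Polynomial (ZMod 2)) ^ p) ^ i with hPhi
  set S : Polynomial (ZMod 2) := genPoly (p ^ 2) t with hS
  set G : Polynomial (ZMod 2) :=
    EuclideanDomain.gcd ((X : Polynomial (ZMod 2)) ^ (p ^ 2) - 1) S with hG
  have hident : Φ * ((X : Polynomial (ZMod 2)) ^ p - 1)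
      = (X : Polynomial (ZMod 2)) ^ (p ^ 2) - 1 := by
    rw [hPhi, geom_sum_mul, ← pow_mul, sq]
  have hXT0 : (X : Polynomial (ZMod 2)) ^ (p ^ 2) - 1 ≠ 0 := by
    have h := Polynomial.X_pow_sub_C_ne_zero (R := ZMod 2) (by positivity : 0 < p ^ 2) 1
    rwa [Polynomial.C_1] at h
  have hXTdeg : ((X : Polynomial (ZMod 2)) ^ (p ^ 2) - 1).natDegree = p ^ 2 := by
    have h := Polynomial.natDegree_X_pow_sub_C (R := ZMod 2) (n := p ^ 2) (r := 1)
    rwa [Polynomial.C_1] at h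
  have hXp0 : (X : Polynomial (ZMod 2)) ^ p - 1 ≠ 0 := by
    have h := Polynomial.X_pow_sub_C_ne_zero (R := ZMod 2) (by omega : 0 < p) 1
    rwa [Polynomial.C_1] at h
  have hXpdeg : ((X : Polynomial (ZMod 2)) ^ p - 1).natDegree = p := by
    have h := Polynomial.natDegree_X_pow_sub_C (R := ZMod 2) (n := p) (r := 1)
    rwa [Polynomial.C_1] at h
  have hsqfree : Squarefree ((X : Polynomial (ZMod 2)) ^ (p ^ 2) - 1) := by
    refine Polynomial.Separable.squarefree ?_
    refine Polynomial.X_pow_sub_one_separable_iff.mpr ?_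
    have hoddT : Odd (p ^ 2) := hodd'.pow
    rw [Ne, ZMod.natCast_eq_zero_iff]
    rw [Nat.odd_iff] at hoddT
    omega
  have hPhi0 : Φ ≠ 0 := by
    intro h0; rw [h0, zero_mul] at hident; exact hXT0 hident.symm
  have hPhideg : Φ.natDegree = p ^ 2 - p := by
    have h1 := Polynomial.natDegree_mul hPhi0 hXp0
    rw [hident, hXTdeg, hXpdeg] at h1
    omega
  have hPhiDvd : Φ ∣ (X : Polynomial (ZMod 2)) ^ (p ^ 2) - 1 := ⟨_, hident.symm⟩
  have hPhiSq : Squarefree Φ := hsqfree.squarefree_of_dvd hPhiDvd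
  have hGd1 : G ∣ (X : Polynomial (ZMod 2)) ^ (p ^ 2) - 1 :=
    EuclideanDomain.gcd_dvd_left _ _
  have hGd2 : G ∣ S := EuclideanDomain.gcd_dvd_right _ _
  have hG0 : G ≠ 0 := fun h => hXT0 ((EuclideanDomain.gcd_eq_zero_iff.mp h).1)
  have hdeg : G.natDegree ≤ p ^ 2 - lam * p := by
    by_contra hcon
    push_neg at hcon
    have hPhiS : Φ ∣ S := by
      refine dvd_of_irreducible_dvd S Φ hPhiSq (fun q hq hqPhi => ?_)
      by_contra hqS
      have hqG : ¬ q ∣ G := fun h => hqS (h.trans hGd2)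
      have hmul : q * G ∣ (X : Polynomial (ZMod 2)) ^ (p ^ 2) - 1 :=
        ((hq.coprime_iff_not_dvd).mpr hqG).mul_dvd (hqPhi.trans hPhiDvd) hGd1
      have hdeg2 := Polynomial.natDegree_le_of_dvd hmul hXT0
      rw [Polynomial.natDegree_mul hq.ne_zero hG0, hXTdeg] at hdeg2
      have hdq := factor_deg hp hodd' hq (by rw [hPhi] at hqPhi; exact hqPhi)
      rw [hord2] at hdq
      omega
    obtain ⟨R, hR⟩ := hPhiS
    have hRdeg : R.natDegree < p := by
      rcases eq_or_ne R 0 with rfl | hR0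
      · simpa using hp.pos
      · have hdegS : S.natDegree ≤ p ^ 2 - 1 := genPoly_natDegree_le _ _ (by positivity)
        rw [hR, Polynomial.natDegree_mul hPhi0 hR0, hPhideg] at hdegS
        omega
    have hval : ∀ i jj : ℕ, i < p → jj < p → t (i * p + jj) = R.coeff jj := by
      intro i jj hi hjj
      have hlt : i * p + jj < p ^ 2 := by
        have h1 : (i + 1) * p ≤ p * p := Nat.mul_le_mul_right p (by omega)
        have h2' : (i + 1) * p = i * p + p := by ring
        omega
      have h1 : t (i * p + jj) = S.coeff (i * p + jj) := (genPoly_coeff _ t _ hlt).symm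
      rw [h1, hR, hPhi]
      exact phi_mul_coeff p (by omega) R hRdeg i jj hi hjj
    have hw : ∀ jj, jj < p → (p - 1) / 2 ≤
        ((range p).filter (fun i => t (i * p + jj) ≠ seqS p f g b (i * p + jj))).card := by
      intro jj hjj
      have hcol : (p - 1) / 2 ≤ ((range p).filter (fun i => i * p + jj ∈ C1 p f g b)).card ∧
          ((range p).filter (fun i => i * p + jj ∈ C1 p f g b)).card ≤ (p + 1) / 2 := by
        rcases Nat.eq_zero_or_pos jj with rfl | hjj1
        · simpa using col0 p f g b hp hodd' hf hfpos hfd hg hb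
        · exact colj p f g b hp hodd' hf hfpos hfd hg hb hjj1 hjj
      have hseq : ∀ i, i < p → seqS p f g b (i * p + jj)
          = if i * p + jj ∈ C1 p f g b then 1 else 0 := by
        intro i hi
        have hlt : i * p + jj < p ^ 2 := by
          have h1 : (i + 1) * p ≤ p * p := Nat.mul_le_mul_right p (by omega)
          have h2' : (i + 1) * p = i * p + p := by ring
          omega
        rw [seqS, Nat.mod_eq_of_lt hlt]
      rcases (show R.coeff jj = 0 ∨ R.coeff jj = 1 from by
          have h01 : ∀ z : ZMod 2, z = 0 ∨ z = 1 := by decide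
          exact h01 _) with hr0 | hr1
      · have hfeq : ((range p).filter (fun i => t (i * p + jj) ≠ seqS p f g b (i * p + jj)))
            = (range p).filter (fun i => i * p + jj ∈ C1 p f g b) := by
          refine Finset.filter_congr (fun i hi => ?_)
          rw [mem_range] at hi
          rw [hval i jj hi hjj, hr0, hseq i hi]
          by_cases hmem : i * p + jj ∈ C1 p f g b
          · simp [hmem]
          · simp [hmem]
        rw [hfeq]; exact hcol.1
      · have hfeq : ((range p).filter (fun i => t (i * p + jj) ≠ seqS p f g b (i * p + jj)))
            = (range p).filter (fun i => ¬ (i * p + jj ∈ C1 p f g b)) := by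
          refine Finset.filter_congr (fun i hi => ?_)
          rw [mem_range] at hi
          rw [hval i jj hi hjj, hr1, hseq i hi]
          by_cases hmem : i * p + jj ∈ C1 p f g b
          · simp [hmem]
          · simp [hmem]
        rw [hfeq]
        have hpart := Finset.card_filter_add_card_filter_not
          (s := range p) (p := fun i => i * p + jj ∈ C1 p f g b)
        rw [card_range] at hpart
        omega
    have hsplit := card_filter_split p (by omega) (fun n => t n ≠ seqS p f g b n)
    have hsum : ∑ jj ∈ range p, ((p : ℕ) - 1) / 2 ≤ ∑ jj ∈ range p,
        ((range p).filter (fun i => t (i * p + jj) ≠ seqS p f g b (i * p + jj))).card :=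
      Finset.sum_le_sum (fun jj hjj => hw jj (mem_range.mp hjj))
    rw [Finset.sum_const, card_range, smul_eq_mul] at hsum
    have harith : 2 * (p * ((p - 1) / 2)) = p * p - p := by
      have h1 : (p - 1) / 2 = mm := by omega
      have h2' : p * p = 2 * (p * mm) + p := by rw [hmm]; ring
      rw [h1]
      omega
    have hrw : ((range (p ^ 2)).filter (fun n => t n ≠ seqS p f g b n)).card
        = ((range (p * p)).filter (fun n => t n ≠ seqS p f g b n)).card := by rw [hpsq]
    omega
  have hLC : LC (p ^ 2) t = p ^ 2 - G.natDegree := by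
    rw [LC, hG, hS]
  omega

/-- if `2^(p-1) ≢ 1 (mod p²)` and `λ` is the order of `2` mod `p`, then
`LC_k((s_n)) ≥ λ·p` for all `0 ≤ k < (p²-p)/2`. -/
theorem stmt8 (p f g b : ℕ) (hp : p.Prime) (hodd : Odd p)
    (hf : Even f) (hfpos : 0 < f) (hfd : f ∣ p - 1)
    (hg : isPrimRoot g (p ^ 2)) (hqg : qp p g = 1)
    (hb : b < f * p)
    (h2 : (2 : ZMod (p ^ 2)) ^ (p - 1) ≠ 1) :
    ∀ k : ℕ, k < (p ^ 2 - p) / 2 →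
      orderOf (2 : ZMod p) * p ≤ errLC (p ^ 2) k (seqS p f g b) := by
  intro k hk
  rw [errLC]
  refine le_csInf ⟨LC (p ^ 2) (seqS p f g b), seqS p f g b, by simp, rfl⟩ ?_
  rintro L ⟨t, ht, rfl⟩
  exact LC_lower p f g b hp hodd hf hfpos hfd hg hb h2 k hk t ht
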